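/- For E_s > 0 and σ² > 0, the function γ² ↦ (E_s/(E_s+γ²)²)·(E_s·σ² + γ⁴) defined on [0,∞) attains its minimum uniquely at γ² = σ², and the minimum value equals E_s·σ²/(E_s+σ²). -/

import Mathlib

/-- Tuning-stage minimization for mismatched LAMA with Gaussian prior:
the function γ² ↦ (E_s/(E_s+γ²)²)·(E_s·σ² + γ⁴) on [0,∞) attains its minimum
uniquely at γ² = σ², with minimum value E_s·σ²/(E_s+σ²). -/
theorem stmt_0 (Es σ2 : ℝ) (hEs : 0 < Es) (hσ2 : 0 < σ2) :
    (Es / (Es + σ2) ^ 2 * (Es * σ2 + σ2 ^ 2) = Es * σ2 / (Es + σ2)) ∧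
    (∀ γ2 : ℝ, 0 ≤ γ2 → γ2 ≠ σ2 →
      Es * σ2 / (Es + σ2) < Es / (Es + γ2) ^ 2 * (Es * σ2 + γ2 ^ 2)) := by
  have hs : 0 < Es + σ2 := by linarith
  constructor
  · field_simp
  · intro γ2 hγ2 hne
    have hg : 0 < Es + γ2 := by linarith
    rw [div_lt_iff₀ hs, div_mul_eq_mul_div, div_mul_eq_mul_div,
      lt_div_iff₀ (by positivity : (0:ℝ) < (Es + γ2)^2)]
    have h : (γ2 - σ2)^2 > 0 := by
      have := sub_ne_zero.mpr hne
      positivity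
    nlinarith [mul_pos hEs h]
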